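/- Let X be a continuum and f : X → X a continuous map such that the set Per(2^f) of periodic points of the induced map 2^f is dense in the hyperspace 2^X. Let A be a free arc in X with endpoints a and b, a ≠ b. Then Per(f) ∩ (A \ {a,b}) ≠ ∅. -/

import Mathlib

open Set Topology Filter TopologicalSpace

/-- A dendrite: a nondegenerate continuum in which any two distinct points can be
separated by a third point. -/
def IsDendrite (X : Type*) [TopologicalSpace X] : Prop :=
  Nontrivial X ∧ ∀ x y : X, x ≠ y → ∃ z : X, z ≠ x ∧ z ≠ y ∧
    connectedComponentIn ({z}ᶜ : Set X) x ≠ connectedComponentIn ({z}ᶜ : Set X) y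

/-- `p` is an endpoint of `X` if `X \ {p}` is connected. -/
def IsEndpointOf (X : Type*) [TopologicalSpace X] (p : X) : Prop :=
  IsPreconnected ({p}ᶜ : Set X)

/-- A periodic point of `f`. -/
def IsPeriodic {X : Type*} (f : X → X) (x : X) : Prop :=
  ∃ n : ℕ, 1 ≤ n ∧ f^[n] x = x

/-- `x` has dense forward orbit under `f`. -/
def HasDenseOrbit {X : Type*} [TopologicalSpace X] (f : X → X) (x : X) : Prop :=
  Dense {y : X | ∃ n : ℕ, 1 ≤ n ∧ f^[n] x = y}

/-- Topological transitivity. -/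
def TopTransitive {X : Type*} [TopologicalSpace X] (f : X → X) : Prop :=
  ∀ U V : Set X, IsOpen U → IsOpen V → U.Nonempty → V.Nonempty →
    ∃ n : ℕ, 0 < n ∧ (f^[n] '' U ∩ V).Nonempty

/-- Total transitivity: every iterate is transitive. -/
def TotallyTransitive {X : Type*} [TopologicalSpace X] (f : X → X) : Prop :=
  ∀ n : ℕ, 1 ≤ n → TopTransitive (f^[n])

/-- Weak mixing: `f × f` is transitive. -/
def WeaklyMixing {X : Type*} [TopologicalSpace X] (f : X → X) : Prop :=
  TopTransitive (Prod.map f f)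

/-- Topological mixing. -/
def TopMixing {X : Type*} [TopologicalSpace X] (f : X → X) : Prop :=
  ∀ U V : Set X, IsOpen U → IsOpen V → U.Nonempty → V.Nonempty →
    ∃ N : ℕ, ∀ n, N ≤ n → (f^[n] '' U ∩ V).Nonempty

/-- Exactness. -/
def TopExact {X : Type*} [TopologicalSpace X] (f : X → X) : Prop :=
  ∀ U : Set X, IsOpen U → U.Nonempty → ∃ N : ℕ, 0 < N ∧ f^[N] '' U = Set.univ

/-- `A` is an arc with endpoints `a` and `b`. -/
def IsArcEnds {X : Type*} [TopologicalSpace X] (A : Set X) (a b : X) : Prop :=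
  ∃ e : (Set.Icc (0:ℝ) 1) ≃ₜ A,
    (e ⟨0, by norm_num⟩ : X) = a ∧ (e ⟨1, by norm_num⟩ : X) = b

/-- `A` is a free arc with endpoints `a` and `b`. -/
def IsFreeArc {X : Type*} [TopologicalSpace X] (A : Set X) (a b : X) : Prop :=
  IsArcEnds A a b ∧ IsOpen (A \ {a, b})

/-- A regular periodic decomposition of length `m` for `f`. -/
def IsRegPerDecomp {X : Type*} [TopologicalSpace X] (f : X → X) (m : ℕ)
    (Ds : ZMod m → Set X) : Prop :=
  0 < m ∧ (∀ i, Ds i = closure (interior (Ds i))) ∧ (⋃ i, Ds i) = Set.univ ∧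
    (∀ i, f '' Ds i = Ds (i + 1)) ∧ (∀ i j, i ≠ j → IsNowhereDense (Ds i ∩ Ds j))

/-- `f` admits a terminal (maximal-length) regular periodic decomposition. -/
def HasTerminalDecomp {X : Type*} [TopologicalSpace X] (f : X → X) : Prop :=
  ∃ (m : ℕ) (Ds : ZMod m → Set X), IsRegPerDecomp f m Ds ∧
    ∀ (m' : ℕ) (Ds' : ZMod m' → Set X), IsRegPerDecomp f m' Ds' → m' ≤ m

/-- The induced map on the hyperspace of nonempty closed (= compact) subsets. -/
def hyperMap {X : Type*} [TopologicalSpace X] {f : X → X} (hf : Continuous f) :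
    NonemptyCompacts X → NonemptyCompacts X :=
  fun A => ⟨⟨f '' A, A.isCompact.image hf⟩, A.nonempty.image f⟩

/-- The set of connected components of `X \ {p}`. -/
def componentsAt (X : Type*) [TopologicalSpace X] (p : X) : Set (Set X) :=
  {C | ∃ x : X, x ≠ p ∧ C = connectedComponentIn ({p}ᶜ : Set X) x}

section StmtFourteenAux

/-- Separation helper: `{s ∈ D | g s ≤ h s}` is compact for `D` compact. -/
lemma aux14_isCompact_sep {D : Set ℝ} (hD : IsCompact D) {g h : ℝ → ℝ}
    (hg : ContinuousOn g D) (hh : ContinuousOn h D) :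
    IsCompact {s ∈ D | g s ≤ h s} := by
  have hc : CompactSpace D := isCompact_iff_compactSpace.mp hD
  have hcl : IsClosed {x : D | g ↑x ≤ h ↑x} := isClosed_le hg.restrict hh.restrict
  have hcomp : IsCompact {x : D | g ↑x ≤ h ↑x} := hcl.isCompact
  have himg := hcomp.image continuous_subtype_val
  convert himg using 1
  ext s
  constructor
  · rintro ⟨hsD, hle⟩
    exact ⟨⟨s, hsD⟩, hle, rfl⟩
  · rintro ⟨⟨t, htD⟩, hle, rfl⟩
    exact ⟨htD, hle⟩

lemma aux14_hyper_iter {X : Type*} [MetricSpace X] {f : X → X} (hf : Continuous f)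
    (n : ℕ) (B : NonemptyCompacts X) :
    (((hyperMap hf)^[n] B : NonemptyCompacts X) : Set X) = f^[n] '' (B : Set X) := by
  induction n with
  | zero => simp
  | succ n ih =>
    rw [Function.iterate_succ_apply']
    have h1 : ((hyperMap hf ((hyperMap hf)^[n] B) : NonemptyCompacts X) : Set X)
        = f '' (((hyperMap hf)^[n] B : NonemptyCompacts X) : Set X) := rfl
    rw [h1, ih, ← Set.image_comp, ← Function.iterate_succ']

/-- From density of periodic points of the hyperspace map, extract a periodic compact
set inside any open set. -/
lemma aux14_getK {X : Type*} [MetricSpace X] [CompactSpace X] {f : X → X} (hf : Continuous f)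
    (hper : Dense {A : NonemptyCompacts X | IsPeriodic (hyperMap hf) A})
    {O : Set X} (hO : IsOpen O) {x0 : X} (hx0 : x0 ∈ O) :
    ∃ (K : Set X) (m : ℕ), 1 ≤ m ∧ K.Nonempty ∧ IsCompact K ∧ f^[m] '' K ⊆ K ∧ K ⊆ O := by
  obtain ⟨r, hr, hball⟩ := Metric.isOpen_iff.mp hO x0 hx0
  set S0 : NonemptyCompacts X := ⟨⟨{x0}, isCompact_singleton⟩, Set.singleton_nonempty x0⟩
    with hS0
  obtain ⟨B, hBmem⟩ := Metric.dense_iff.mp hper S0 r hr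
  obtain ⟨hBball, m, hm, hfix⟩ := hBmem
  refine ⟨(B : Set X), m, hm, B.nonempty, B.isCompact, ?_, ?_⟩
  · rw [← aux14_hyper_iter hf m B, hfix]
  · intro y hy
    apply hball
    have hS0set : (S0 : Set X) = {x0} := rfl
    have hne : EMetric.hausdorffEdist (B : Set X) (S0 : Set X) ≠ ⊤ :=
      Metric.hausdorffEdist_ne_top_of_nonempty_of_bounded B.nonempty S0.nonempty
        B.isCompact.isBounded S0.isCompact.isBounded
    have h1 : Metric.infDist y (S0 : Set X) ≤ Metric.hausdorffDist (B : Set X) (S0 : Set X) :=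
      Metric.infDist_le_hausdorffDist_of_mem hy hne
    have h3 : Metric.infDist y (S0 : Set X) = dist y x0 := by
      rw [hS0set, Metric.infDist_singleton]
    rw [Metric.mem_ball]
    calc dist y x0 = Metric.infDist y (S0 : Set X) := h3.symm
      _ ≤ Metric.hausdorffDist (B : Set X) (S0 : Set X) := h1
      _ = dist B S0 := Metric.NonemptyCompacts.dist_eq.symm
      _ < r := by rwa [Metric.mem_ball] at hBball

/-- Exit lemma: if `F` is continuous, `F γ1 ∈ A` but `F` maps `(γ1,γ2)` outside `A`,
then `F γ1` leaves through an endpoint. -/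
lemma aux14_exit {X : Type*} [MetricSpace X] {F : ℝ → X} {φ : X → ℝ} {A Ao : Set X}
    (hF : Continuous F) (hAoOpen : IsOpen Ao) (hAoSub : Ao ⊆ A)
    (hAoExit : ∀ x ∈ A, x ∉ Ao → φ x = 0 ∨ φ x = 1)
    {γ1 γ2 : ℝ} (h12 : γ1 < γ2) (hmemA : F γ1 ∈ A)
    (hout : ∀ s, γ1 < s → s < γ2 → F s ∉ A) :
    φ (F γ1) = 0 ∨ φ (F γ1) = 1 := by
  apply hAoExit _ hmemA
  intro hmemo
  have hγcl : γ1 ∈ closure (Set.Ioo γ1 γ2) := by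
    rw [closure_Ioo h12.ne]
    exact ⟨le_refl _, h12.le⟩
  have hcl : F γ1 ∈ closure (F '' Set.Ioo γ1 γ2) :=
    (hF.continuousAt.continuousWithinAt).mem_closure_image hγcl
  have hclc : F γ1 ∈ closure Aᶜ := by
    refine closure_mono ?_ hcl
    rintro _ ⟨s, hs, rfl⟩
    exact hout s hs.1 hs.2
  obtain ⟨z, hzAo, hzc⟩ := (mem_closure_iff.mp hclc) Ao hAoOpen hmemo
  exact hzc (hAoSub hzAo)

/-- IVT extraction: a continuous function crossing from `≤ c` to `≥ d` admits a minimal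
crossing interval mapped into `[c,d]` with endpoints achieving `c` and `d`. -/
lemma aux14_extract {g : ℝ → ℝ} {α β c d : ℝ} (hαβ : α ≤ β)
    (hg : ContinuousOn g (Set.Icc α β)) (hgα : g α ≤ c) (hgβ : d ≤ g β) (hcd : c ≤ d) :
    ∃ r1 r2 : ℝ, α ≤ r1 ∧ r1 ≤ r2 ∧ r2 ≤ β ∧ g r1 = c ∧ g r2 = d ∧
      ∀ s, r1 ≤ s → s ≤ r2 → c ≤ g s ∧ g s ≤ d := by
  classical
  set Sd : Set ℝ := {s ∈ {s ∈ Set.Icc α β | g s ≤ d} | d ≤ g s} with hSd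
  have hSdcomp : IsCompact Sd :=
    aux14_isCompact_sep (aux14_isCompact_sep isCompact_Icc hg continuousOn_const)
      continuousOn_const (hg.mono fun s hs => hs.1)
  have hSdne : Sd.Nonempty := by
    obtain ⟨r, hrIcc, hgr⟩ := intermediate_value_Icc hαβ hg ⟨hgα.trans hcd, hgβ⟩
    exact ⟨r, ⟨hrIcc, hgr.le⟩, hgr.ge⟩
  set r2 := sInf Sd with hr2def
  have hr2 : r2 ∈ Sd := hSdcomp.sInf_mem hSdne
  have hgr2 : g r2 = d := le_antisymm hr2.1.2 hr2.2
  have hr2Icc : r2 ∈ Set.Icc α β := hr2.1.1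
  have hg2 : ContinuousOn g (Set.Icc α r2) := hg.mono (Set.Icc_subset_Icc_right hr2Icc.2)
  set Sc : Set ℝ := {s ∈ {s ∈ Set.Icc α r2 | g s ≤ c} | c ≤ g s} with hSc
  have hSccomp : IsCompact Sc :=
    aux14_isCompact_sep (aux14_isCompact_sep isCompact_Icc hg2 continuousOn_const)
      continuousOn_const (hg2.mono fun s hs => hs.1)
  have hScne : Sc.Nonempty := by
    obtain ⟨r, hrIcc, hgr⟩ := intermediate_value_Icc hr2Icc.1 hg2 ⟨hgα, hcd.trans hgr2.ge⟩
    exact ⟨r, ⟨hrIcc, hgr.le⟩, hgr.ge⟩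
  set r1 := sSup Sc with hr1def
  have hr1 : r1 ∈ Sc := hSccomp.sSup_mem hScne
  have hgr1 : g r1 = c := le_antisymm hr1.1.2 hr1.2
  have hαr1 : α ≤ r1 := hr1.1.1.1
  have hr1r2 : r1 ≤ r2 := hr1.1.1.2
  refine ⟨r1, r2, hαr1, hr1r2, hr2Icc.2, hgr1, hgr2, ?_⟩
  intro s hs1 hs2
  have hsIcc : s ∈ Set.Icc α β := ⟨hαr1.trans hs1, hs2.trans hr2Icc.2⟩
  constructor
  · by_contra hlt
    push_neg at hlt
    have hg4 : ContinuousOn g (Set.Icc s r2) :=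
      hg.mono (Set.Icc_subset_Icc hsIcc.1 hr2Icc.2)
    obtain ⟨t, htIcc, hgt⟩ := intermediate_value_Icc hs2 hg4 ⟨hlt.le, hcd.trans hgr2.ge⟩
    have htSc : t ∈ Sc := ⟨⟨⟨hsIcc.1.trans htIcc.1, htIcc.2⟩, hgt.le⟩, hgt.ge⟩
    have : t ≤ r1 := le_csSup hSccomp.bddAbove htSc
    have hts : t = s := le_antisymm (this.trans hs1) htIcc.1
    rw [hts] at hgt
    exact absurd hgt (ne_of_lt hlt)
  · by_contra hlt
    push_neg at hlt
    have hg3 : ContinuousOn g (Set.Icc r1 s) :=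
      hg.mono (Set.Icc_subset_Icc hαr1 hsIcc.2)
    obtain ⟨t, htIcc, hgt⟩ := intermediate_value_Icc hs1 hg3 ⟨hgr1.le.trans hcd, hlt.le⟩
    have htSd : t ∈ Sd := ⟨⟨⟨hαr1.trans htIcc.1, (htIcc.2.trans hs2).trans hr2Icc.2⟩,
      hgt.le⟩, hgt.ge⟩
    have hr2t : r2 ≤ t := csInf_le hSdcomp.bddBelow htSd
    have hts : t = s := le_antisymm htIcc.2 (hs2.trans hr2t)
    rw [hts] at hgt
    exact absurd hgt (ne_of_gt hlt)

/-- Core covering lemma: a compact set inside the open window `E '' (c,d)` of the arc,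
invariant under `f^[m]`, yields either a periodic point in the open arc, or an
interval inside `(c,d)` whose image under `f^[m]` stays in `A` and stretches (in the arc
coordinate) from below `d` to above `d'`. -/
lemma aux14_core {X : Type*} [MetricSpace X] {f : X → X} (hf : Continuous f)
    {E : ℝ → X} {φ : X → ℝ} {A Ao : Set X}
    (hE : Continuous E) (hφ : ContinuousOn φ A) (hA : IsClosed A)
    (hmem : ∀ t ∈ Set.Icc (0:ℝ) 1, E t ∈ A)
    (hid1 : ∀ t ∈ Set.Icc (0:ℝ) 1, φ (E t) = t)
    (hid2 : ∀ x ∈ A, E (φ x) = x)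
    (hφr : ∀ x ∈ A, φ x ∈ Set.Icc (0:ℝ) 1)
    (hAoOpen : IsOpen Ao) (hAoSub : Ao ⊆ A)
    (hAoMem : ∀ t : ℝ, 0 < t → t < 1 → E t ∈ Ao)
    (hAoExit : ∀ x ∈ A, x ∉ Ao → φ x = 0 ∨ φ x = 1)
    {c d d' : ℝ} (hc : 0 < c) (hcd : c < d) (hd1 : d < 1) (hdd' : d ≤ d') (hd'1 : d' ≤ 1)
    {m : ℕ} (hm : 1 ≤ m) {K : Set X} (hKne : K.Nonempty) (hKcomp : IsCompact K)
    (hKinv : f^[m] '' K ⊆ K) (hKw : K ⊆ E '' Set.Ioo c d) :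
    (∃ p ∈ Ao, IsPeriodic f p) ∨
    ∃ p q : ℝ, c < p ∧ p ≤ q ∧ q < d ∧ (∀ s : ℝ, p ≤ s → s ≤ q → f^[m] (E s) ∈ A) ∧
      φ (f^[m] (E p)) ≤ d ∧ d' ≤ φ (f^[m] (E q)) := by
  classical
  have hIooIcc : Set.Ioo c d ⊆ Set.Icc (0:ℝ) 1 := fun t ht =>
    ⟨(hc.trans ht.1).le, (ht.2.trans hd1).le⟩
  have hKA : K ⊆ A := by
    intro x hx
    obtain ⟨t, ht, rfl⟩ := hKw hx
    exact hmem t (hIooIcc ht)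
  -- the coordinate set of K
  set T : Set ℝ := Set.Icc (0:ℝ) 1 ∩ E ⁻¹' K with hTdef
  have hTIoo : ∀ t ∈ T, t ∈ Set.Ioo c d := by
    rintro t ⟨ht1, ht2⟩
    obtain ⟨t', ht', heq⟩ := hKw ht2
    have : t' = t := by
      have h1 := hid1 t ht1
      have h2 := hid1 t' (hIooIcc ht')
      rw [← heq] at h1
      rw [← h1, h2]
    rwa [← this]
  have hTcomp : IsCompact T := isCompact_Icc.inter_right (hKcomp.isClosed.preimage hE)
  have hTne : T.Nonempty := by
    obtain ⟨x, hx⟩ := hKne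
    obtain ⟨t, ht, rfl⟩ := hKw hx
    exact ⟨t, hIooIcc ht, hx⟩
  set u := sInf T with hudef
  set v := sSup T with hvdef
  have hu : u ∈ T := hTcomp.sInf_mem hTne
  have hv : v ∈ T := hTcomp.sSup_mem hTne
  have huv : u ≤ v := csInf_le hTcomp.bddBelow hv
  have hcu : c < u := (hTIoo u hu).1
  have hvd : v < d := (hTIoo v hv).2
  set F : ℝ → X := fun s => f^[m] (E s) with hFdef
  have hF : Continuous F := (hf.iterate m).comp hE
  set D : Set ℝ := Set.Icc u v ∩ F ⁻¹' A with hDdef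
  have hDcomp : IsCompact D := isCompact_Icc.inter_right (hA.preimage hF)
  have hFK : ∀ t ∈ T, F t ∈ K := fun t ht => hKinv ⟨E t, ht.2, rfl⟩
  have hTD : ∀ t ∈ T, t ∈ D := fun t ht =>
    ⟨⟨csInf_le hTcomp.bddBelow ht, le_csSup hTcomp.bddAbove ht⟩, hKA (hFK t ht)⟩
  set Φ : ℝ → ℝ := fun s => φ (F s) with hΦdef
  have hΦD : ContinuousOn Φ D := hφ.comp hF.continuousOn fun s hs => hs.2
  have hσ : ∀ t ∈ T, Φ t ∈ T := by
    intro t ht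
    have hFtK := hFK t ht
    refine ⟨hφr (F t) (hKA hFtK), ?_⟩
    show E (φ (F t)) ∈ K
    rw [hid2 (F t) (hKA hFtK)]
    exact hFtK
  by_cases hz : ∃ s ∈ D, Φ s = s
  · obtain ⟨s, hsD, hΦs⟩ := hz
    have hFA : F s ∈ A := hsD.2
    have hEs : E s = F s := by
      have h2 := hid2 (F s) hFA
      rwa [show φ (F s) = s from hΦs] at h2
    refine Or.inl ⟨E s, hAoMem s ?_ ?_, m, hm, hEs.symm⟩
    · exact hc.trans (hcu.trans_le hsD.1.1)
    · exact (hsD.1.2.trans_lt hvd).trans hd1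
  · push_neg at hz
    have hnz : ∀ s ∈ D, Φ s ≠ s := hz
    have hDu : u ∈ D := hTD u hu
    have hDv : v ∈ D := hTD v hv
    have hΦuT : Φ u ∈ T := hσ u hu
    have hΦu : u < Φ u := lt_of_le_of_ne (csInf_le hTcomp.bddBelow hΦuT) (Ne.symm (hnz u hDu))
    have hΦv : Φ v < v := lt_of_le_of_ne (le_csSup hTcomp.bddAbove (hσ v hv)) (hnz v hDv)
    set Dneg : Set ℝ := {s ∈ D | Φ s ≤ s} with hDnegdef
    have hDnegComp : IsCompact Dneg := aux14_isCompact_sep hDcomp hΦD continuousOn_id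
    have hDnegNe : Dneg.Nonempty := ⟨v, hDv, hΦv.le⟩
    set β0 := sInf Dneg with hβ0def
    have hβ0 : β0 ∈ Dneg := hDnegComp.sInf_mem hDnegNe
    have hβ0D : β0 ∈ D := hβ0.1
    have hΦβ0 : Φ β0 < β0 := lt_of_le_of_ne hβ0.2 (hnz β0 hβ0D)
    have hβmin : ∀ s ∈ D, s < β0 → s < Φ s := by
      intro s hs hlt
      by_contra hle
      push_neg at hle
      exact absurd (csInf_le hDnegComp.bddBelow ⟨hs, hle⟩) (not_le.mpr hlt)
    set Q : Set ℝ := {s ∈ D | s ≤ Φ s} with hQdef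
    have hQcomp : IsCompact Q := aux14_isCompact_sep hDcomp continuousOn_id hΦD
    set P : Set ℝ := {s ∈ D | s < β0} with hPdef
    have huβ : u < β0 := by
      rcases lt_or_eq_of_le hβ0D.1.1 with h | h
      · exact h
      · exfalso
        rw [← h] at hΦβ0
        exact absurd hΦu (not_lt.mpr hΦβ0.le)
    have huP : u ∈ P := ⟨hDu, huβ⟩
    have hPbdd : BddAbove P := ⟨β0, fun s hs => hs.2.le⟩
    set α0 := sSup P with hα0def
    have hPQ : P ⊆ Q := fun s hs => ⟨hs.1, (hβmin s hs.1 hs.2).le⟩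
    have hα0Q : α0 ∈ Q :=
      closure_minimal hPQ hQcomp.isClosed (csSup_mem_closure ⟨u, huP⟩ hPbdd)
    have hα0D : α0 ∈ D := hα0Q.1
    have hΦα0 : α0 < Φ α0 := lt_of_le_of_ne hα0Q.2 (Ne.symm (hnz α0 hα0D))
    have hα0β : α0 < β0 := by
      have hle : α0 ≤ β0 := csSup_le ⟨u, huP⟩ fun s hs => hs.2.le
      rcases lt_or_eq_of_le hle with h | h
      · exact h
      · exfalso
        rw [h] at hΦα0
        exact absurd hΦα0 (not_lt.mpr hΦβ0.le)
    have huα0 : u ≤ α0 := le_csSup hPbdd huP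
    have hgap : ∀ s, α0 < s → s < β0 → F s ∉ A := by
      intro s h1 h2 hFA
      have hsD : s ∈ D := ⟨⟨huα0.trans h1.le, h2.le.trans hβ0D.1.2⟩, hFA⟩
      exact absurd (le_csSup hPbdd ⟨hsD, h2⟩) (not_le.mpr h1)
    have hexit : Φ α0 = 0 ∨ Φ α0 = 1 :=
      aux14_exit hF hAoOpen hAoSub hAoExit hα0β hα0D.2 hgap
    have hΦα0one : Φ α0 = 1 := by
      rcases hexit with h | h
      · exfalso
        rw [h] at hΦα0
        exact absurd hΦα0 (not_lt.mpr ((hc.trans (hcu.trans_le huα0)).le))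
      · exact h
    set Sd : Set ℝ := {s ∈ D | d' ≤ Φ s} with hSddef
    have hSdcomp : IsCompact Sd := aux14_isCompact_sep hDcomp continuousOn_const hΦD
    have hSdne : Sd.Nonempty := ⟨α0, hα0D, by rw [hΦα0one]; exact hd'1⟩
    set y := sInf Sd with hydef
    have hy : y ∈ Sd := hSdcomp.sInf_mem hSdne
    have hyD : y ∈ D := hy.1
    have hyΦ : d' ≤ Φ y := hy.2
    have hyα0 : y ≤ α0 := csInf_le hSdcomp.bddBelow ⟨hα0D, by rw [hΦα0one]; exact hd'1⟩
    have hΦuv : Φ u ≤ v := le_csSup hTcomp.bddAbove hΦuT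
    have hΦud' : Φ u < d' := (hΦuv.trans_lt hvd).trans_le hdd'
    have huy : u < y := by
      rcases lt_or_eq_of_le hyD.1.1 with h | h
      · exact h
      · exfalso
        rw [← h] at hyΦ
        exact absurd hyΦ (not_le.mpr hΦud')
    have hNoGap : ∀ s : ℝ, u ≤ s → s ≤ y → F s ∈ A := by
      intro s hus hsy
      by_contra hFA
      have hsu : s ≠ u := fun h => hFA (h ▸ hDu.2)
      have hsyne : s ≠ y := fun h => hFA (h ▸ hyD.2)
      have hus' : u < s := lt_of_le_of_ne hus (Ne.symm hsu)
      have hsy' : s < y := lt_of_le_of_ne hsy hsyne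
      set G1 : Set ℝ := D ∩ Set.Icc u s with hG1def
      have hG1comp : IsCompact G1 := hDcomp.inter_right isClosed_Icc
      have hG1ne : G1.Nonempty := ⟨u, hDu, le_refl u, hus⟩
      set γ1 := sSup G1 with hγ1def
      have hγ1 : γ1 ∈ G1 := hG1comp.sSup_mem hG1ne
      have hγ1D : γ1 ∈ D := hγ1.1
      have hγ1s : γ1 < s := lt_of_le_of_ne hγ1.2.2 (fun h => hFA (h ▸ hγ1D.2))
      set G2 : Set ℝ := D ∩ Set.Icc s y with hG2def
      have hG2comp : IsCompact G2 := hDcomp.inter_right isClosed_Icc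
      have hG2ne : G2.Nonempty := ⟨y, hyD, hsy, le_refl y⟩
      set γ2 := sInf G2 with hγ2def
      have hγ2 : γ2 ∈ G2 := hG2comp.sInf_mem hG2ne
      have hγ2D : γ2 ∈ D := hγ2.1
      have hγ2y : γ2 ≤ y := hγ2.2.2
      have hsγ2 : s < γ2 := lt_of_le_of_ne hγ2.2.1 (fun h => hFA (h ▸ hγ2D.2))
      have hγ12 : γ1 < γ2 := hγ1s.trans hsγ2
      have hgap12 : ∀ r, γ1 < r → r < γ2 → F r ∉ A := by
        intro r h1 h2 hFA'
        have hrD : r ∈ D :=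
          ⟨⟨hγ1D.1.1.trans h1.le, (h2.le.trans hγ2y).trans hyD.1.2⟩, hFA'⟩
        have hrs : r ≠ s := fun h => hFA (h ▸ hFA')
        rcases lt_or_gt_of_ne hrs with h | h
        · exact absurd (le_csSup (hG1comp.bddAbove) ⟨hrD, hγ1D.1.1.trans h1.le, h.le⟩)
            (not_le.mpr h1)
        · exact absurd (csInf_le (hG2comp.bddBelow) ⟨hrD, h.le, h2.le.trans hγ2y⟩)
            (not_le.mpr h2)
      have hexitγ1 : Φ γ1 = 0 ∨ Φ γ1 = 1 :=
        aux14_exit hF hAoOpen hAoSub hAoExit hγ12 hγ1D.2 hgap12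
      have hγ1β : γ1 < β0 := hγ1s.trans ((hsy'.trans_le hyα0).trans hα0β)
      have hΦγ1 : γ1 < Φ γ1 := hβmin γ1 hγ1D hγ1β
      have hΦγ1one : Φ γ1 = 1 := by
        rcases hexitγ1 with h | h
        · exfalso
          rw [h] at hΦγ1
          exact absurd hΦγ1 (not_lt.mpr (hc.trans (hcu.trans_le hγ1D.1.1)).le)
        · exact h
      have hγ1Sd : γ1 ∈ Sd := ⟨hγ1D, by rw [hΦγ1one]; exact hd'1⟩
      exact absurd (csInf_le hSdcomp.bddBelow hγ1Sd) (not_le.mpr (hγ1s.trans hsy'))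
    exact Or.inr ⟨u, y, hcu, huy.le, (hyα0.trans hα0D.1.2).trans_lt hvd, hNoGap,
      hΦuv.trans hvd.le, hyΦ⟩

/-- Abstract version of Statement 14 in terms of a parametrized arc. -/
lemma aux14_combine {X : Type*} [MetricSpace X] [CompactSpace X] {f : X → X}
    (hf : Continuous f)
    (hper : Dense {A : NonemptyCompacts X | IsPeriodic (hyperMap hf) A})
    {E : ℝ → X} {φ : X → ℝ} {A Ao : Set X}
    (hE : Continuous E) (hφ : ContinuousOn φ A) (hA : IsClosed A)
    (hmem : ∀ t ∈ Set.Icc (0:ℝ) 1, E t ∈ A)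
    (hid1 : ∀ t ∈ Set.Icc (0:ℝ) 1, φ (E t) = t)
    (hid2 : ∀ x ∈ A, E (φ x) = x)
    (hφr : ∀ x ∈ A, φ x ∈ Set.Icc (0:ℝ) 1)
    (hAoOpen : IsOpen Ao) (hAoSub : Ao ⊆ A)
    (hAoMem : ∀ t : ℝ, 0 < t → t < 1 → E t ∈ Ao)
    (hAoExit : ∀ x ∈ A, x ∉ Ao → φ x = 0 ∨ φ x = 1) :
    ∃ p ∈ Ao, IsPeriodic f p := by
  classical
  -- reflected parametrization
  set E' : ℝ → X := fun t => E (1 - t) with hE'def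
  set φ' : X → ℝ := fun x => 1 - φ x with hφ'def
  have hE' : Continuous E' := hE.comp (continuous_const.sub continuous_id)
  have hφ' : ContinuousOn φ' A := continuousOn_const.sub hφ
  have hrefl : ∀ t : ℝ, t ∈ Set.Icc (0:ℝ) 1 → (1 - t) ∈ Set.Icc (0:ℝ) 1 := by
    intro t ht
    constructor <;> [linarith [ht.2]; linarith [ht.1]]
  have hmem' : ∀ t ∈ Set.Icc (0:ℝ) 1, E' t ∈ A := fun t ht => hmem _ (hrefl t ht)
  have hid1' : ∀ t ∈ Set.Icc (0:ℝ) 1, φ' (E' t) = t := by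
    intro t ht
    show 1 - φ (E (1 - t)) = t
    rw [hid1 _ (hrefl t ht)]
    ring
  have hid2' : ∀ x ∈ A, E' (φ' x) = x := by
    intro x hx
    show E (1 - (1 - φ x)) = x
    rw [sub_sub_cancel]
    exact hid2 x hx
  have hφr' : ∀ x ∈ A, φ' x ∈ Set.Icc (0:ℝ) 1 := fun x hx => hrefl _ (hφr x hx)
  have hAoMem' : ∀ t : ℝ, 0 < t → t < 1 → E' t ∈ Ao := fun t h1 h2 =>
    hAoMem (1 - t) (by linarith) (by linarith)
  have hAoExit' : ∀ x ∈ A, x ∉ Ao → φ' x = 0 ∨ φ' x = 1 := by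
    intro x hx hno
    rcases hAoExit x hx hno with h | h
    · right; show 1 - φ x = 1; rw [h]; ring
    · left; show 1 - φ x = 0; rw [h]; ring
  -- first window (1/4, 3/8)
  have h14 : (1/4 : ℝ) ∈ Set.Ioo (1/4 : ℝ) (3/8) → False := fun h => absurd h.1 (lt_irrefl _)
  have hO1open : IsOpen (Ao ∩ φ ⁻¹' Set.Ioo (1/4 : ℝ) (3/8)) :=
    (hφ.mono hAoSub).isOpen_inter_preimage hAoOpen isOpen_Ioo
  have hmid1 : (5/16 : ℝ) ∈ Set.Icc (0:ℝ) 1 := by norm_num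
  have hx01 : E (5/16) ∈ Ao ∩ φ ⁻¹' Set.Ioo (1/4 : ℝ) (3/8) := by
    refine ⟨hAoMem _ (by norm_num) (by norm_num), ?_⟩
    show φ (E (5/16)) ∈ Set.Ioo (1/4 : ℝ) (3/8)
    rw [hid1 _ hmid1]
    norm_num
  obtain ⟨K1, m1, hm1, hK1ne, hK1comp, hK1inv, hK1sub⟩ :=
    aux14_getK hf hper hO1open hx01
  have hK1w : K1 ⊆ E '' Set.Ioo (1/4 : ℝ) (3/8) := by
    intro x hx
    obtain ⟨hxAo, hxφ⟩ := hK1sub hx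
    exact ⟨φ x, hxφ, hid2 x (hAoSub hxAo)⟩
  -- second window (5/8, 3/4)
  have hO2open : IsOpen (Ao ∩ φ ⁻¹' Set.Ioo (5/8 : ℝ) (3/4)) :=
    (hφ.mono hAoSub).isOpen_inter_preimage hAoOpen isOpen_Ioo
  have hmid2 : (11/16 : ℝ) ∈ Set.Icc (0:ℝ) 1 := by norm_num
  have hx02 : E (11/16) ∈ Ao ∩ φ ⁻¹' Set.Ioo (5/8 : ℝ) (3/4) := by
    refine ⟨hAoMem _ (by norm_num) (by norm_num), ?_⟩
    show φ (E (11/16)) ∈ Set.Ioo (5/8 : ℝ) (3/4)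
    rw [hid1 _ hmid2]
    norm_num
  obtain ⟨K2, m2, hm2, hK2ne, hK2comp, hK2inv, hK2sub⟩ :=
    aux14_getK hf hper hO2open hx02
  have hK2w : K2 ⊆ E '' Set.Ioo (5/8 : ℝ) (3/4) := by
    intro x hx
    obtain ⟨hxAo, hxφ⟩ := hK2sub hx
    exact ⟨φ x, hxφ, hid2 x (hAoSub hxAo)⟩
  have hK2w' : K2 ⊆ E' '' Set.Ioo (1/4 : ℝ) (3/8) := by
    intro x hx
    obtain ⟨t, ht, rfl⟩ := hK2w hx
    refine ⟨1 - t, ⟨by linarith [ht.2], by linarith [ht.1]⟩, ?_⟩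
    show E (1 - (1 - t)) = E t
    rw [sub_sub_cancel]
  -- apply the core lemma to both windows
  rcases aux14_core hf hE hφ hA hmem hid1 hid2 hφr hAoOpen hAoSub hAoMem hAoExit
      (by norm_num : (0:ℝ) < 1/4) (by norm_num : (1/4:ℝ) < 3/8) (by norm_num : (3/8:ℝ) < 1)
      (by norm_num : (3/8:ℝ) ≤ 3/4) (by norm_num : (3/4:ℝ) ≤ 1)
      hm1 hK1ne hK1comp hK1inv hK1w with hdone | hcov1
  · exact hdone
  rcases aux14_core hf hE' hφ' hA hmem' hid1' hid2' hφr' hAoOpen hAoSub hAoMem' hAoExit'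
      (by norm_num : (0:ℝ) < 1/4) (by norm_num : (1/4:ℝ) < 3/8) (by norm_num : (3/8:ℝ) < 1)
      (by norm_num : (3/8:ℝ) ≤ 3/4) (by norm_num : (3/4:ℝ) ≤ 1)
      hm2 hK2ne hK2comp hK2inv hK2w' with hdone | hcov2'
  · exact hdone
  obtain ⟨p1, q1, hp1, hpq1, hq1, hD1, hΦ1p, hΦ1q⟩ := hcov1
  obtain ⟨p', q', hp', hpq', hq', hD2', hΦ2p', hΦ2q'⟩ := hcov2'
  -- translate the reflected covering back
  set p2 : ℝ := 1 - q' with hp2def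
  set q2 : ℝ := 1 - p' with hq2def
  have hp2gt : (5/8 : ℝ) < p2 := by rw [hp2def]; linarith
  have hq2lt : q2 < (3/4 : ℝ) := by rw [hq2def]; linarith
  have hp2q2 : p2 ≤ q2 := by rw [hp2def, hq2def]; linarith
  have hD2 : ∀ s : ℝ, p2 ≤ s → s ≤ q2 → f^[m2] (E s) ∈ A := by
    intro s h1 h2
    have := hD2' (1 - s) (by rw [hq2def] at h2; linarith) (by rw [hp2def] at h1; linarith)
    show f^[m2] (E s) ∈ A
    have heq : E' (1 - s) = E s := by
      show E (1 - (1 - s)) = E s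
      rw [sub_sub_cancel]
    rwa [heq] at this
  have hEp2 : E' q' = E p2 := by
    show E (1 - q') = E p2
    rw [hp2def]
  have hEq2 : E' p' = E q2 := by
    show E (1 - p') = E q2
    rw [hq2def]
  have hΦ2p : φ (f^[m2] (E p2)) ≤ 1/4 := by
    have h := hΦ2q'
    rw [hEp2] at h
    have : (3/4 : ℝ) ≤ 1 - φ (f^[m2] (E p2)) := h
    linarith
  have hΦ2q : (5/8 : ℝ) ≤ φ (f^[m2] (E q2)) := by
    have h := hΦ2p'
    rw [hEq2] at h
    have : 1 - φ (f^[m2] (E q2)) ≤ 3/8 := h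
    linarith
  -- compose the two coverings
  set Φ1 : ℝ → ℝ := fun s => φ (f^[m1] (E s)) with hΦ1def
  have hΦ1cont : ContinuousOn Φ1 (Set.Icc p1 q1) :=
    hφ.comp ((hf.iterate m1).comp hE).continuousOn fun s hs => hD1 s hs.1 hs.2
  obtain ⟨r1, r2, hr1p1, hr12, hr2q1, hgr1, hgr2, hbetween⟩ :=
    aux14_extract hpq1 hΦ1cont
      (by rw [hΦ1def]; exact hΦ1p.trans (by linarith))
      (by rw [hΦ1def]; exact le_trans (by linarith) hΦ1q) hp2q2
  set Φ2 : ℝ → ℝ := fun t => φ (f^[m2] (E t)) with hΦ2def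
  have hΦ2cont : ContinuousOn Φ2 (Set.Icc p2 q2) :=
    hφ.comp ((hf.iterate m2).comp hE).continuousOn fun t ht => hD2 t ht.1 ht.2
  set h : ℝ → ℝ := fun s => Φ2 (Φ1 s) with hhdef
  have hhcont : ContinuousOn h (Set.Icc r1 r2) := by
    refine hΦ2cont.comp (hΦ1cont.mono (Set.Icc_subset_Icc hr1p1 hr2q1)) ?_
    intro s hs
    exact ⟨(hbetween s hs.1 hs.2).1, (hbetween s hs.1 hs.2).2⟩
  set g : ℝ → ℝ := fun s => h s - s with hgdef
  have hgcont : ContinuousOn g (Set.Icc r1 r2) := hhcont.sub continuousOn_id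
  have hgr1le : g r1 ≤ 0 := by
    show h r1 - r1 ≤ 0
    have h1 : h r1 = Φ2 p2 := by rw [hhdef]; simp only; rw [hgr1]
    rw [h1]
    have : Φ2 p2 ≤ 1/4 := hΦ2p
    have : (1/4 : ℝ) < r1 := hp1.trans_le hr1p1
    linarith [hΦ2p]
  have hgr2ge : (0:ℝ) ≤ g r2 := by
    show (0:ℝ) ≤ h r2 - r2
    have h1 : h r2 = Φ2 q2 := by rw [hhdef]; simp only; rw [hgr2]
    rw [h1]
    have : r2 < 3/8 := hr2q1.trans_lt hq1
    linarith [hΦ2q]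
  obtain ⟨sstar, hsIcc, hgs⟩ := intermediate_value_Icc hr12 hgcont ⟨hgr1le, hgr2ge⟩
  have hhs : h sstar = sstar := by
    have : h sstar - sstar = 0 := hgs
    linarith
  -- the point E sstar is periodic
  have hsp1 : p1 ≤ sstar := hr1p1.trans hsIcc.1
  have hsq1 : sstar ≤ q1 := hsIcc.2.trans hr2q1
  have hFA1 : f^[m1] (E sstar) ∈ A := hD1 sstar hsp1 hsq1
  have hEΦ1 : E (Φ1 sstar) = f^[m1] (E sstar) := hid2 _ hFA1
  have hΦ1mem := hbetween sstar hsIcc.1 hsIcc.2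
  have hFA2 : f^[m2] (E (Φ1 sstar)) ∈ A := hD2 (Φ1 sstar) hΦ1mem.1 hΦ1mem.2
  have hkey : E sstar = f^[m2] (E (Φ1 sstar)) := by
    have h2 := hid2 _ hFA2
    have h3 : φ (f^[m2] (E (Φ1 sstar))) = sstar := hhs
    rwa [h3] at h2
  have hper' : f^[m2 + m1] (E sstar) = E sstar := by
    rw [Function.iterate_add_apply, ← hEΦ1, ← hkey]
  refine ⟨E sstar, hAoMem sstar ?_ ?_, m2 + m1, le_trans hm1 (Nat.le_add_left m1 m2), hper'⟩
  · have : (1/4 : ℝ) < sstar := hp1.trans_le hsp1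
    linarith
  · have : sstar < 3/8 := hsq1.trans_lt hq1
    linarith

end StmtFourteenAux

/-- If the periodic points of the induced hyperspace map are dense, then
every free arc contains, in its interior part, a periodic point of `f`. -/
theorem stmt14 {X : Type*} [MetricSpace X] [CompactSpace X] [ConnectedSpace X]
    {f : X → X} (hf : Continuous f)
    (hper : Dense {A : NonemptyCompacts X | IsPeriodic (hyperMap hf) A})
    {A : Set X} {a b : X} (hab : a ≠ b) (hfree : IsFreeArc A a b) :
    ∃ p ∈ A \ {a, b}, IsPeriodic f p := by
  classical
  obtain ⟨⟨e, he0, he1⟩, hopen⟩ := hfree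
  have hAcs : CompactSpace A := e.compactSpace
  have hAcomp : IsCompact A := isCompact_iff_compactSpace.mpr hAcs
  have hAcl : IsClosed A := hAcomp.isClosed
  set E : ℝ → X := fun t => ((e (Set.projIcc 0 1 zero_le_one t) : A) : X) with hEdef
  set φ : X → ℝ :=
    fun x => if h : x ∈ A then ((e.symm ⟨x, h⟩ : Set.Icc (0:ℝ) 1) : ℝ) else 0 with hφdef
  have hE : Continuous E := continuous_subtype_val.comp (e.continuous.comp continuous_projIcc)
  have hmem : ∀ t ∈ Set.Icc (0:ℝ) 1, E t ∈ A := fun t _ =>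
    (e (Set.projIcc 0 1 zero_le_one t)).2
  have hφA : ∀ (x : X) (h : x ∈ A), φ x = ((e.symm ⟨x, h⟩ : Set.Icc (0:ℝ) 1) : ℝ) :=
    fun x h => dif_pos h
  have hφ : ContinuousOn φ A := by
    rw [continuousOn_iff_continuous_restrict]
    have hres : Set.domRestrict A φ = fun (x : A) => ((e.symm x : Set.Icc (0:ℝ) 1) : ℝ) := by
      funext x
      rw [Set.restrict_apply, hφA _ x.2]
    rw [hres]
    exact continuous_subtype_val.comp e.symm.continuous
  have hid1 : ∀ t ∈ Set.Icc (0:ℝ) 1, φ (E t) = t := by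
    intro t ht
    have hproj : Set.projIcc 0 1 zero_le_one t = ⟨t, ht⟩ := Set.projIcc_of_mem zero_le_one ht
    have hmemE : E t ∈ A := hmem t ht
    rw [hφA _ hmemE]
    have hsub : (⟨E t, hmemE⟩ : A) = e ⟨t, ht⟩ := by
      apply Subtype.ext
      show E t = ((e ⟨t, ht⟩ : A) : X)
      rw [hEdef]
      simp only
      rw [hproj]
    rw [hsub, Homeomorph.symm_apply_apply]
  have hid2 : ∀ x ∈ A, E (φ x) = x := by
    intro x hx
    rw [hφA _ hx]
    show ((e (Set.projIcc 0 1 zero_le_one ((e.symm ⟨x, hx⟩ : Set.Icc (0:ℝ) 1) : ℝ)) : A) : X) = x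
    rw [Set.projIcc_of_mem zero_le_one (e.symm ⟨x, hx⟩).2, Subtype.coe_eta,
      Homeomorph.apply_symm_apply]
  have hφr : ∀ x ∈ A, φ x ∈ Set.Icc (0:ℝ) 1 := by
    intro x hx
    rw [hφA _ hx]
    exact (e.symm ⟨x, hx⟩).2
  have hE0 : E 0 = a := by
    show ((e (Set.projIcc 0 1 zero_le_one 0) : A) : X) = a
    rw [Set.projIcc_left]
    exact he0
  have hE1 : E 1 = b := by
    show ((e (Set.projIcc 0 1 zero_le_one 1) : A) : X) = b
    rw [Set.projIcc_right]
    exact he1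
  have hAoMem : ∀ t : ℝ, 0 < t → t < 1 → E t ∈ A \ {a, b} := by
    intro t h1 h2
    have ht : t ∈ Set.Icc (0:ℝ) 1 := ⟨h1.le, h2.le⟩
    refine ⟨hmem t ht, ?_⟩
    intro hmem'
    rcases hmem' with h | h
    · have h0 : φ (E t) = φ (E 0) := by rw [h, hE0]
      rw [hid1 t ht, hid1 0 (by norm_num)] at h0
      exact absurd h0 (ne_of_gt h1)
    · rw [Set.mem_singleton_iff] at h
      have h0 : φ (E t) = φ (E 1) := by rw [h, hE1]
      rw [hid1 t ht, hid1 1 (by norm_num)] at h0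
      exact absurd h0 (ne_of_lt h2)
  have hAoExit : ∀ x ∈ A, x ∉ A \ {a, b} → φ x = 0 ∨ φ x = 1 := by
    intro x hx hno
    have hxab : x ∈ ({a, b} : Set X) := by
      by_contra hcon
      exact hno ⟨hx, hcon⟩
    rcases hxab with h | h
    · left
      rw [h, ← hE0, hid1 0 (by norm_num)]
    · right
      rw [Set.mem_singleton_iff] at h
      rw [h, ← hE1, hid1 1 (by norm_num)]
  exact aux14_combine hf hper hE hφ hAcl hmem hid1 hid2 hφr hopen Set.diff_subset
    hAoMem hAoExit
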